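/- Let K ≥ 1 be a natural number and let c : {0,…,K} → ℂ satisfy c_k ≠ 0 for all k and the alternating normalization condition Σ_{k=0}^{K} (−1)^k |c_k|² = 0. Define h_k = (Σ_{j=0}^{k} (−1)^{j+k} |c_j|²) / (conj(c_k) · c_{k+1}) for 0 ≤ k ≤ K−1, and let T ∈ M_{K+1}(ℂ) be the Hermitian tridiagonal matrix with zero diagonal, T_{k,k+1} = h_k and T_{k+1,k} = conj(h_k), all other entries zero. Then T v_+ = v_+ and T v_− = −v_−, where v_± ∈ ℂ^{K+1} has components (v_±)_k = (±1)^k c_k. -/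

import Mathlib

open Finset

lemma normsq_c (z : ℂ) : ((‖z‖^2 : ℝ) : ℂ) = (starRingEnd ℂ) z * z := by
  rw [Complex.ofReal_pow, ← Complex.mul_conj']; ring

lemma sum_if_val {n : ℕ} (m : ℕ) (f : Fin n → ℂ) :
    ∑ q : Fin n, (if (q:ℕ) = m then f q else 0) =
    if hm : m < n then f ⟨m, hm⟩ else 0 := by
  split_ifs with hm
  · rw [Finset.sum_eq_single (⟨m, hm⟩ : Fin n)]
    · simp
    · intro b _ hb
      rw [if_neg]
      simpa [Fin.ext_iff] using hb
    · simp
  · exact Finset.sum_eq_zero fun q _ => by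
      rw [if_neg]
      intro hq
      exact hm (hq ▸ q.isLt)

lemma aux_key (K : ℕ) (hK : 1 ≤ K) (c : ℕ → ℂ)
    (hc : ∀ k ≤ K, c k ≠ 0)
    (hnorm : ∑ k ∈ range (K + 1), (-1 : ℂ) ^ k * (‖c k‖ ^ 2 : ℝ) = 0)
    (h : ℕ → ℂ)
    (hh : ∀ k < K, h k =
      (∑ j ∈ range (k + 1), (-1 : ℂ) ^ (j + k) * (‖c j‖ ^ 2 : ℝ)) /
        ((starRingEnd ℂ) (c k) * c (k + 1)))
    (T : Matrix (Fin (K + 1)) (Fin (K + 1)) ℂ)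
    (hT : ∀ p q : Fin (K + 1), T p q =
      if (q : ℕ) = (p : ℕ) + 1 then h p
      else if (p : ℕ) = (q : ℕ) + 1 then (starRingEnd ℂ) (h q)
      else 0)
    (ε : ℂ) (hε2 : ε ^ 2 = 1)
    (v : Fin (K + 1) → ℂ) (hv : ∀ k : Fin (K + 1), v k = ε ^ (k : ℕ) * c k) :
    T.mulVec v = ε • v := by
  set S : ℕ → ℂ := fun k => ∑ j ∈ range (k + 1), (-1 : ℂ) ^ (j + k) * (‖c j‖ ^ 2 : ℝ) with hSdef
  have hhS : ∀ k, k < K → h k = S k / ((starRingEnd ℂ) (c k) * c (k + 1)) := hh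
  have hSconj : ∀ k, (starRingEnd ℂ) (S k) = S k := by
    intro k
    simp only [hSdef, map_sum, map_mul, map_pow, map_neg, map_one, Complex.conj_ofReal]
  have hSsucc : ∀ k, S k + S (k + 1) = (starRingEnd ℂ) (c (k + 1)) * c (k + 1) := by
    intro k
    rw [← normsq_c]
    simp only [hSdef, Finset.sum_range_succ]
    have h1 : ∀ j, (-1 : ℂ) ^ (j + (k + 1)) = -(-1 : ℂ) ^ (j + k) := by
      intro j
      rw [show j + (k + 1) = (j + k) + 1 from rfl, pow_succ]
      ring
    have h3 : (-1 : ℂ) ^ (k + 1 + k) = -1 := Odd.neg_one_pow ⟨k, by ring⟩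
    simp only [h1, h3, neg_mul, Finset.sum_neg_distrib]
    ring
  have hS0 : S 0 = (starRingEnd ℂ) (c 0) * c 0 := by
    rw [← normsq_c]
    simp [hSdef]
  have hSK : ∀ m, K = m + 1 → S m = (starRingEnd ℂ) (c K) * c K := by
    intro m hm
    subst hm
    rw [Finset.sum_range_succ] at hnorm
    have hA : ∑ j ∈ range (m + 1), (-1 : ℂ) ^ j * (‖c j‖ ^ 2 : ℝ)
        = (-1 : ℂ) ^ m * (‖c (m + 1)‖ ^ 2 : ℝ) := by
      have hp : (-1 : ℂ) ^ (m + 1) = -(-1 : ℂ) ^ m := by rw [pow_succ]; ring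
      rw [hp] at hnorm
      linear_combination hnorm
    have hsm : S m = (-1 : ℂ) ^ m * ∑ j ∈ range (m + 1), (-1 : ℂ) ^ j * (‖c j‖ ^ 2 : ℝ) := by
      rw [Finset.mul_sum]
      refine Finset.sum_congr rfl fun j _ => ?_
      rw [pow_add]; ring
    rw [hsm, hA, ← mul_assoc, ← pow_add, Even.neg_one_pow ⟨m, rfl⟩, one_mul, ← normsq_c]
  funext p
  obtain ⟨i, hi⟩ := p
  have hterm : ∀ q : Fin (K + 1), T ⟨i, hi⟩ q * v q =
      (if (q : ℕ) = i + 1 then h i * v q else 0) +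
      (if i = (q : ℕ) + 1 then (starRingEnd ℂ) (h (q : ℕ)) * v q else 0) := by
    intro q
    rw [hT]
    simp only [Fin.val_mk]
    by_cases h1 : (q : ℕ) = i + 1
    · rw [if_pos h1, if_pos h1, if_neg (by omega : ¬ i = (q : ℕ) + 1), add_zero]
    · by_cases h2 : i = (q : ℕ) + 1
      · rw [if_neg h1, if_neg h1, if_pos h2, if_pos h2, zero_add]
      · rw [if_neg h1, if_neg h1, if_neg h2, if_neg h2, zero_mul, add_zero]
  have hmv : T.mulVec v ⟨i, hi⟩ =
      (∑ q : Fin (K + 1), if (q : ℕ) = i + 1 then h i * v q else 0) +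
      (∑ q : Fin (K + 1), if i = (q : ℕ) + 1 then (starRingEnd ℂ) (h (q : ℕ)) * v q else 0) := by
    simp only [Matrix.mulVec, dotProduct]
    rw [← Finset.sum_add_distrib]
    exact Finset.sum_congr rfl fun q _ => hterm q
  rw [Pi.smul_apply, smul_eq_mul, hmv, sum_if_val]
  rcases Nat.eq_zero_or_eq_succ_pred i with hi0 | hi1
  · subst hi0
    have hz : (∑ q : Fin (K + 1), if (0 : ℕ) = (q : ℕ) + 1 then (starRingEnd ℂ) (h (q : ℕ)) * v q else 0) = 0 :=
      Finset.sum_eq_zero fun q _ => if_neg (by omega)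
    rw [hz, dif_pos (by omega : 0 + 1 < K + 1), hv, hv, hhS 0 hK, hS0]
    simp only [Fin.val_mk]
    have h0c : (starRingEnd ℂ) (c 0) ≠ 0 := by simpa using hc 0 (by omega)
    have h1c := hc 1 hK
    field_simp
    ring
  · obtain ⟨j, rfl⟩ : ∃ j, i = j + 1 := ⟨i - 1, hi1⟩
    have hrw : (∑ q : Fin (K + 1), if j + 1 = (q : ℕ) + 1 then (starRingEnd ℂ) (h (q : ℕ)) * v q else 0)
        = ∑ q : Fin (K + 1), if (q : ℕ) = j then (starRingEnd ℂ) (h (q : ℕ)) * v q else 0 :=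
      Finset.sum_congr rfl fun q _ => if_congr (by omega) rfl rfl
    rw [hrw, sum_if_val, dif_pos (by omega : j < K + 1)]
    have hjK : j < K := by omega
    have hconjh : (starRingEnd ℂ) (h j) = S j / (c j * (starRingEnd ℂ) (c (j + 1))) := by
      rw [hhS j hjK, map_div₀, map_mul, hSconj, Complex.conj_conj]
    have hcj := hc j (by omega)
    have hcj1 := hc (j + 1) (by omega)
    have hcj1c : (starRingEnd ℂ) (c (j + 1)) ≠ 0 := by simpa using hcj1
    have hεrw : ε * ε ^ (j + 1) = ε ^ j := by
      rw [← pow_succ', show j + 1 + 1 = j + 2 from rfl, pow_add, hε2, mul_one]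
    by_cases hmid : j + 1 + 1 < K + 1
    · rw [dif_pos hmid, hv, hv, hv, hconjh, hhS (j + 1) (by omega)]
      simp only [Fin.val_mk]
      have hkey := hSsucc j
      have hcj2 := hc (j + 2) (by omega)
      have hε2' : ε ^ (j + 1 + 1) = ε ^ j := by
        rw [show j + 1 + 1 = j + 2 from rfl, pow_add, hε2, mul_one]
      rw [hε2', show ε * (ε ^ (j + 1) * c (j + 1)) = ε ^ j * c (j + 1) from by
        rw [← mul_assoc, hεrw]]
      field_simp
      linear_combination (ε ^ j) * hkey
    · have hjK1 : K = j + 1 := by omega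
      subst hjK1
      rw [dif_neg hmid, hv, hv, hconjh, hSK j rfl]
      simp only [Fin.val_mk]
      rw [show ε * (ε ^ (j + 1) * c (j + 1)) = ε ^ j * c (j + 1) from by
        rw [← mul_assoc, hεrw]]
      field_simp
      ring

/-- Explicit nearest-neighbor tridiagonal Hamiltonian for the
logical parity manifold (Eq. H0Sol of the paper): given Fock-grid coefficients
`c₀, …, c_K` (all nonzero) satisfying the alternating normalization condition
`∑ (−1)^k |c_k|² = 0`, the Hermitian tridiagonal matrix `T` with zero diagonal
and upper entries `T_{k,k+1} = (∑_{j≤k} (−1)^{j+k} |c_j|²)/(conj(c_k)·c_{k+1})`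
satisfies `T v₊ = v₊` and `T v₋ = −v₋`, where `(v_±)_k = (±1)^k c_k`. -/
theorem stmt_0 (K : ℕ) (hK : 1 ≤ K) (c : ℕ → ℂ)
    (hc : ∀ k ≤ K, c k ≠ 0)
    (hnorm : ∑ k ∈ range (K + 1), (-1 : ℂ) ^ k * (‖c k‖ ^ 2 : ℝ) = 0)
    (h : ℕ → ℂ)
    (hh : ∀ k < K, h k =
      (∑ j ∈ range (k + 1), (-1 : ℂ) ^ (j + k) * (‖c j‖ ^ 2 : ℝ)) /
        ((starRingEnd ℂ) (c k) * c (k + 1)))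
    (T : Matrix (Fin (K + 1)) (Fin (K + 1)) ℂ)
    (hT : ∀ p q : Fin (K + 1), T p q =
      if (q : ℕ) = (p : ℕ) + 1 then h p
      else if (p : ℕ) = (q : ℕ) + 1 then (starRingEnd ℂ) (h q)
      else 0)
    (vplus vminus : Fin (K + 1) → ℂ)
    (hvplus : ∀ k : Fin (K + 1), vplus k = (1 : ℂ) ^ (k : ℕ) * c k)
    (hvminus : ∀ k : Fin (K + 1), vminus k = (-1 : ℂ) ^ (k : ℕ) * c k) :
    T.mulVec vplus = vplus ∧ T.mulVec vminus = -vminus := by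
  constructor
  · have := aux_key K hK c hc hnorm h hh T hT 1 (by norm_num) vplus hvplus
    simpa using this
  · have := aux_key K hK c hc hnorm h hh T hT (-1) (by norm_num) vminus hvminus
    rw [this]
    ext k
    simp
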